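/- The function ρ ↦ D(p^ρ‖p) − H(p^ρ) is nonincreasing on the interval (−1, 1] and nondecreasing on the interval [1, ∞); equivalently, the sign of its derivative at ρ equals the sign of ρ − 1. -/

import Mathlib

open scoped BigOperators

noncomputable section

/-- `q` is a probability mass function on `Z`. -/
def IsPMF {Z : Type*} [Fintype Z] (q : Z → ℝ) : Prop :=
  (∀ z, 0 ≤ q z) ∧ ∑ z, q z = 1

/-- Shannon entropy in nats. -/
def entropy {Z : Type*} [Fintype Z] (q : Z → ℝ) : ℝ :=
  - ∑ z, q z * Real.log (q z)

/-- Kullback–Leibler divergence in nats. -/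
def klDiv {Z : Type*} [Fintype Z] (q p : Z → ℝ) : ℝ :=
  ∑ z, q z * Real.log (q z / p z)

/-- The tilted distribution `p^ρ(z) = p(z)^{1/(1+ρ)} / Σ_s p(s)^{1/(1+ρ)}`. -/
def tilted {Z : Type*} [Fintype Z] (p : Z → ℝ) (ρ : ℝ) : Z → ℝ :=
  fun z => p z ^ (1 / (1 + ρ)) / ∑ s, p s ^ (1 / (1 + ρ))


namespace St19

variable {Z : Type*} [Fintype Z] [Nonempty Z]

def S (p : Z → ℝ) (b : ℝ) : ℝ := ∑ z, p z ^ b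
def T (p : Z → ℝ) (b : ℝ) : ℝ := ∑ z, p z ^ b * Real.log (p z)
def U (p : Z → ℝ) (b : ℝ) : ℝ := ∑ z, p z ^ b * Real.log (p z) ^ 2
def f (p : Z → ℝ) (b : ℝ) : ℝ := (2 * b - 1) * (T p b / S p b) - 2 * Real.log (S p b)

variable {p : Z → ℝ}

theorem S_pos (hpos : ∀ z, 0 < p z) (b : ℝ) : 0 < S p b :=
  Finset.sum_pos (fun z _ => Real.rpow_pos_of_pos (hpos z) b) Finset.univ_nonempty

theorem hasDerivAt_S (hpos : ∀ z, 0 < p z) (b : ℝ) : HasDerivAt (S p) (T p b) b := by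
  apply HasDerivAt.fun_sum
  intro z _
  exact (Real.hasStrictDerivAt_const_rpow (hpos z) b).hasDerivAt

theorem hasDerivAt_T (hpos : ∀ z, 0 < p z) (b : ℝ) :
    HasDerivAt (T p) (U p b) b := by
  have : U p b = ∑ z, (p z ^ b * Real.log (p z)) * Real.log (p z) := by
    simp [U, sq, mul_assoc]
  rw [this]
  apply HasDerivAt.fun_sum
  intro z _
  simpa using ((Real.hasStrictDerivAt_const_rpow (hpos z) b).hasDerivAt).mul_const
    (Real.log (p z))

theorem cs (hpos : ∀ z, 0 < p z) (b : ℝ) : T p b ^ 2 ≤ U p b * S p b := by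
  have h := Finset.sum_mul_sq_le_sq_mul_sq Finset.univ
    (fun z => p z ^ (b / 2) * Real.log (p z)) (fun z => p z ^ (b / 2))
  have hb : ∀ z : Z, p z ^ (b / 2) * p z ^ (b / 2) = p z ^ b := by
    intro z
    rw [← Real.rpow_add (hpos z)]; norm_num
  calc T p b ^ 2 = (∑ z, (p z ^ (b / 2) * Real.log (p z)) * p z ^ (b / 2)) ^ 2 := by
        congr 1; apply Finset.sum_congr rfl; intro z _
        rw [mul_right_comm, hb z]
    _ ≤ (∑ z, (p z ^ (b / 2) * Real.log (p z)) ^ 2) * ∑ z, (p z ^ (b / 2)) ^ 2 := h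
    _ = U p b * S p b := by
        congr 1 <;> apply Finset.sum_congr rfl <;> intro z _
        · rw [mul_pow, sq (p z ^ (b/2)), hb z]
        · rw [sq, hb z]

theorem hasDerivAt_f (hpos : ∀ z, 0 < p z) (b : ℝ) :
    HasDerivAt (f p) ((2 * b - 1) * (U p b * S p b - T p b ^ 2) / S p b ^ 2) b := by
  have hS := hasDerivAt_S hpos b
  have hT := hasDerivAt_T hpos b
  have hSne : S p b ≠ 0 := (S_pos hpos b).ne'
  have h1 : HasDerivAt (fun x : ℝ => 2 * x - 1) 2 b := by
    simpa using ((hasDerivAt_id b).const_mul 2).sub_const 1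
  have h2 : HasDerivAt (fun x => T p x / S p x)
      ((U p b * S p b - T p b * T p b) / S p b ^ 2) b := hT.div hS hSne
  have h3 : HasDerivAt (fun x => Real.log (S p x)) (T p b / S p b) b := hS.log hSne
  have := (h1.mul h2).sub ((h3.const_mul 2))
  refine this.congr_deriv ?_
  have h2' : (S p b)^2 ≠ 0 := pow_ne_zero 2 hSne
  ring

theorem f_mono (hpos : ∀ z, 0 < p z) : MonotoneOn (f p) (Set.Ici (1/2 : ℝ)) := by
  have hd : ∀ x : ℝ, HasDerivAt (f p)
      ((2 * x - 1) * (U p x * S p x - T p x ^ 2) / S p x ^ 2) x := hasDerivAt_f hpos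
  apply monotoneOn_of_deriv_nonneg (convex_Ici _)
  · exact fun x _ => (hd x).continuousAt.continuousWithinAt
  · exact fun x _ => ((hd x).differentiableAt).differentiableWithinAt
  · intro x hx
    rw [(hd x).deriv]
    rw [interior_Ici, Set.mem_Ioi] at hx
    apply div_nonneg _ (sq_nonneg _)
    apply mul_nonneg (by linarith) (by linarith [cs hpos x])

theorem f_anti (hpos : ∀ z, 0 < p z) : AntitoneOn (f p) (Set.Iic (1/2 : ℝ)) := by
  have hd : ∀ x : ℝ, HasDerivAt (f p)
      ((2 * x - 1) * (U p x * S p x - T p x ^ 2) / S p x ^ 2) x := hasDerivAt_f hpos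
  apply antitoneOn_of_deriv_nonpos (convex_Iic _)
  · exact fun x _ => (hd x).continuousAt.continuousWithinAt
  · exact fun x _ => ((hd x).differentiableAt).differentiableWithinAt
  · intro x hx
    rw [(hd x).deriv]
    rw [interior_Iic, Set.mem_Iio] at hx
    apply div_nonpos_of_nonpos_of_nonneg _ (sq_nonneg _)
    apply mul_nonpos_of_nonpos_of_nonneg (by linarith) (by linarith [cs hpos x])

theorem key (hpos : ∀ z, 0 < p z) (ρ : ℝ) :
    klDiv (tilted p ρ) p - entropy (tilted p ρ) = f p (1 / (1 + ρ)) := by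
  set b := 1 / (1 + ρ) with hb
  have hSpos := S_pos (p := p) hpos b
  have hSne := hSpos.ne'
  calc klDiv (tilted p ρ) p - entropy (tilted p ρ)
      = ∑ z, (p z ^ b / S p b) * ((2 * b - 1) * Real.log (p z) - 2 * Real.log (S p b)) := by
        rw [klDiv, entropy, sub_neg_eq_add, ← Finset.sum_add_distrib]
        apply Finset.sum_congr rfl
        intro z _
        have hrp : (0 : ℝ) < p z ^ b := Real.rpow_pos_of_pos (hpos z) b
        have hq : tilted p ρ z = p z ^ b / S p b := rfl
        rw [hq, Real.log_div (div_pos hrp hSpos).ne' (hpos z).ne',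
          Real.log_div hrp.ne' hSne, Real.log_rpow (hpos z)]
        ring
    _ = f p b := by
        have h1 : ∀ z, (p z ^ b / S p b) * ((2 * b - 1) * Real.log (p z)
            - 2 * Real.log (S p b)) = (2 * b - 1) * ((p z ^ b * Real.log (p z)) / S p b)
            - 2 * Real.log (S p b) * (p z ^ b / S p b) := by intro z; ring
        simp_rw [h1]
        rw [Finset.sum_sub_distrib, ← Finset.mul_sum, ← Finset.mul_sum,
          ← Finset.sum_div, ← Finset.sum_div, f]
        rw [← T, ← S, div_self hSne, mul_one]

end St19

/-- Lemma 19: `ρ ↦ D(p^ρ‖p) − H(p^ρ)` is nonincreasing on `(−1,1]` and nondecreasing on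
`[1,∞)`. -/
theorem statement19 {Z : Type*} [Fintype Z] [Nonempty Z]
    (p : Z → ℝ) (hp : IsPMF p) (hpos : ∀ z, 0 < p z) :
    AntitoneOn (fun ρ : ℝ => klDiv (tilted p ρ) p - entropy (tilted p ρ))
        (Set.Ioc (-1 : ℝ) 1) ∧
      MonotoneOn (fun ρ : ℝ => klDiv (tilted p ρ) p - entropy (tilted p ρ))
        (Set.Ici (1 : ℝ)) := by
  constructor
  · intro x hx y hy hxy
    simp only [St19.key hpos x, St19.key hpos y]
    have hx0 : (0 : ℝ) < 1 + x := by linarith [hx.1]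
    have hy0 : (0 : ℝ) < 1 + y := by linarith [hy.1]
    have hbx : (1 : ℝ) / 2 ≤ 1 / (1 + x) :=
      one_div_le_one_div_of_le hx0 (by linarith [hx.2])
    have hby : (1 : ℝ) / 2 ≤ 1 / (1 + y) :=
      one_div_le_one_div_of_le hy0 (by linarith [hy.2])
    have hba : 1 / (1 + y) ≤ 1 / (1 + x) := one_div_le_one_div_of_le hx0 (by linarith)
    exact St19.f_mono hpos hby hbx hba
  · intro x hx y hy hxy
    simp only [St19.key hpos x, St19.key hpos y]
    have hx0 : (0 : ℝ) < 1 + x := by simp at hx; linarith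
    have hy0 : (0 : ℝ) < 1 + y := by simp at hy; linarith
    have hbx : 1 / (1 + x) ≤ (1 : ℝ) / 2 :=
      one_div_le_one_div_of_le (by norm_num) (by simp at hx; linarith)
    have hby : 1 / (1 + y) ≤ (1 : ℝ) / 2 :=
      one_div_le_one_div_of_le (by norm_num) (by simp at hy; linarith)
    have hba : 1 / (1 + y) ≤ 1 / (1 + x) := one_div_le_one_div_of_le hx0 (by linarith)
    exact St19.f_anti hpos hby hbx hba
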